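/- arXiv:2603.11276 — 3 statements merged into one kernel-verified Lean document; each statement's English description precedes it below -/
import Mathlib

section
/- Let n1, n2 > 0 be real weights, ν1, ν2 ∈ [0, 1], p ∈ (0, 1), and L(δ) = (1/(n1 + n2)) · [ n1·ℓ(ν1, p + δ) + n2·ℓ(ν2, p − (n1/n2)·δ) ]. If ν1 > ν2 then L′(0) < 0, and if ν1 < ν2 then L′(0) > 0. In particular, to first order the validation loss strictly decreases for a positive shift δ > 0 on arm 1 if and only if the validation difference ν1 − ν2 is positive. -/
/-- The binary-outcome log loss of a constant prediction `p ∈ (0,1)`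
against a target mean `ν ∈ [0,1]`. -/
noncomputable def logLoss (ν p : ℝ) : ℝ :=
  -ν * Real.log p - (1 - ν) * Real.log (1 - p)

/-- For the weighted validation log loss `L`, the derivative at `δ = 0` is negative when
`ν1 > ν2` and positive when `ν1 < ν2`: to first order, a positive shift on arm 1 strictly
decreases the validation loss exactly when the validation difference `ν1 − ν2` is positive. -/
theorem deriv_validationLoss_sign
    (n1 n2 ν1 ν2 p : ℝ) (hn1 : 0 < n1) (hn2 : 0 < n2)
    (hν1 : ν1 ∈ Set.Icc (0 : ℝ) 1) (hν2 : ν2 ∈ Set.Icc (0 : ℝ) 1)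
    (hp : p ∈ Set.Ioo (0 : ℝ) 1)
    (L : ℝ → ℝ)
    (hL : ∀ δ : ℝ, L δ = (1 / (n1 + n2)) *
      (n1 * logLoss ν1 (p + δ) + n2 * logLoss ν2 (p - (n1 / n2) * δ))) :
    (ν1 > ν2 → deriv L 0 < 0) ∧ (ν1 < ν2 → deriv L 0 > 0) := by
  obtain ⟨hp0, hp1⟩ := hp
  have hp0' : p ≠ 0 := ne_of_gt hp0
  have h1p : (0:ℝ) < 1 - p := by linarith
  have h1p' : (1:ℝ) - p ≠ 0 := ne_of_gt h1p
  set c : ℝ := n1 / n2 with hc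
  have hLf : L = fun δ : ℝ => (1 / (n1 + n2)) *
      (n1 * logLoss ν1 (p + δ) + n2 * logLoss ν2 (p - c * δ)) := funext hL
  have hA : HasDerivAt (fun δ : ℝ => p + δ) 1 0 := by
    simpa using (hasDerivAt_id (0:ℝ)).const_add p
  have hB : HasDerivAt (fun δ : ℝ => p - c * δ) (-c) 0 := by
    simpa using ((hasDerivAt_id (0:ℝ)).const_mul c).const_sub p
  have hlogA : HasDerivAt (fun δ : ℝ => Real.log (p + δ)) (1 / p) 0 := by
    have := hA.log (by simpa using hp0')
    simpa using this
  have hlogA' : HasDerivAt (fun δ : ℝ => Real.log (1 - (p + δ))) (-1 / (1 - p)) 0 := by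
    have := (hA.const_sub 1).log (by simpa using h1p')
    simpa using this
  have hlogB : HasDerivAt (fun δ : ℝ => Real.log (p - c * δ)) (-c / p) 0 := by
    have := hB.log (by simpa using hp0')
    simpa using this
  have hlogB' : HasDerivAt (fun δ : ℝ => Real.log (1 - (p - c * δ))) (c / (1 - p)) 0 := by
    have := (hB.const_sub 1).log (by simpa using h1p')
    simpa using this
  have hd1 : HasDerivAt (fun δ : ℝ => logLoss ν1 (p + δ))
      (-ν1 * (1 / p) - (1 - ν1) * (-1 / (1 - p))) 0 := by
    simpa [logLoss, Pi.sub_def] using ((hlogA.const_mul (-ν1)).sub (hlogA'.const_mul (1 - ν1)))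
  have hd2 : HasDerivAt (fun δ : ℝ => logLoss ν2 (p - c * δ))
      (-ν2 * (-c / p) - (1 - ν2) * (c / (1 - p))) 0 := by
    simpa [logLoss, Pi.sub_def] using ((hlogB.const_mul (-ν2)).sub (hlogB'.const_mul (1 - ν2)))
  have hD : HasDerivAt L ((1 / (n1 + n2)) *
      (n1 * (-ν1 * (1 / p) - (1 - ν1) * (-1 / (1 - p))) +
       n2 * (-ν2 * (-c / p) - (1 - ν2) * (c / (1 - p))))) 0 := by
    rw [hLf]
    exact ((hd1.const_mul n1).add (hd2.const_mul n2)).const_mul _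
  have hderiv : deriv L 0 = -(n1 * (ν1 - ν2)) / ((n1 + n2) * p * (1 - p)) := by
    rw [hD.deriv, hc]
    have hn12 : n1 + n2 ≠ 0 := by positivity
    field_simp
    ring
  have hden : 0 < (n1 + n2) * p * (1 - p) := by positivity
  constructor
  · intro h
    rw [hderiv]
    apply div_neg_of_neg_of_pos _ hden
    nlinarith
  · intro h
    rw [hderiv]
    apply div_pos _ hden
    nlinarith
end

section
/- Let n1, n2 > 0 be real weights, let a1, a2 ∈ [0, 1] with a1 ≠ a2 be the training means of the two arms, set p = (n1·a1 + n2·a2)/(n1 + n2), and assume p ∈ (0, 1). Let ν1, ν2 ∈ [0, 1] with ν1 ≠ ν2 be the validation means, and define L(δ) = (1/(n1 + n2)) · [ n1·ℓ(ν1, p + δ) + n2·ℓ(ν2, p − (n1/n2)·δ) ]. Then there exists η0 > 0 such that for all learning rates η ∈ (0, η0): L(η·(a1 − p)) < L(0) if and only if (a1 − a2)·(ν1 − ν2) > 0. That is, for sufficiently small learning rate, the updated ensemble Tree_0 + η·Tree_1 strictly reduces the validation log loss exactly when the training difference Δ_tr = a1 − a2 and the validation difference Δ_val = ν1 − ν2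 agree in sign. -/
lemma exists_lt_of_hasDerivAt_neg {g : ℝ → ℝ} {K : ℝ} (hg : HasDerivAt g K 0) (hK : K < 0) :
    ∃ η0 > (0:ℝ), ∀ η ∈ Set.Ioo (0:ℝ) η0, g η < g 0 := by
  have hs := hasDerivAt_iff_tendsto_slope.mp hg
  have h1 : ∀ᶠ η in nhdsWithin (0:ℝ) {x | x ≠ 0}, slope g 0 η < 0 :=
    hs.eventually (gt_mem_nhds hK)
  have h3 : ∀ᶠ η in nhdsWithin (0:ℝ) (Set.Ioi 0), slope g 0 η < 0 :=
    h1.filter_mono (nhdsWithin_mono _ (fun x hx => ne_of_gt hx))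
  have h4 : {η : ℝ | slope g 0 η < 0} ∈ nhdsWithin (0:ℝ) (Set.Ioi 0) := h3
  obtain ⟨u, hu, hsub⟩ := mem_nhdsGT_iff_exists_Ioo_subset.1 h4
  refine ⟨u, hu, fun η hη => ?_⟩
  have hslope : slope g 0 η < 0 := hsub hη
  rw [slope_def_field] at hslope
  have hηpos : 0 < η := hη.1
  have h5 : (g η - g 0) / (η - 0) < 0 := by
    simpa [div_eq_inv_mul, mul_comm] using hslope
  rcases (div_neg_iff).1 h5 with ⟨h, h'⟩ | ⟨h, h'⟩
  · linarith
  · linarith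

lemma exists_gt_of_hasDerivAt_pos {g : ℝ → ℝ} {K : ℝ} (hg : HasDerivAt g K 0) (hK : 0 < K) :
    ∃ η0 > (0:ℝ), ∀ η ∈ Set.Ioo (0:ℝ) η0, g 0 < g η := by
  obtain ⟨η0, hη0, h⟩ := exists_lt_of_hasDerivAt_neg hg.neg (by linarith : -K < 0)
  exact ⟨η0, hη0, fun η hη => by have := h η hη; simpa using this⟩

/-- For sufficiently small learning rate `η`, adding `Tree_1` (shifting the arm-1
prediction by `η·(a1 − p)`) strictly reduces the validation log loss if and only if
the training difference `a1 − a2` and the validation difference `ν1 − ν2` agree in sign. -/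
theorem tree1_accepted_iff_sign_agreement
    (n1 n2 a1 a2 ν1 ν2 : ℝ) (hn1 : 0 < n1) (hn2 : 0 < n2)
    (ha1 : a1 ∈ Set.Icc (0 : ℝ) 1) (ha2 : a2 ∈ Set.Icc (0 : ℝ) 1) (hane : a1 ≠ a2)
    (hν1 : ν1 ∈ Set.Icc (0 : ℝ) 1) (hν2 : ν2 ∈ Set.Icc (0 : ℝ) 1) (hνne : ν1 ≠ ν2)
    (p : ℝ) (hpdef : p = (n1 * a1 + n2 * a2) / (n1 + n2)) (hp : p ∈ Set.Ioo (0 : ℝ) 1)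
    (L : ℝ → ℝ)
    (hL : ∀ δ : ℝ, L δ = (1 / (n1 + n2)) *
      (n1 * logLoss ν1 (p + δ) + n2 * logLoss ν2 (p - (n1 / n2) * δ))) :
    ∃ η0 > (0 : ℝ), ∀ η ∈ Set.Ioo (0 : ℝ) η0,
      (L (η * (a1 - p)) < L 0 ↔ (a1 - a2) * (ν1 - ν2) > 0) := by
  have hn12 : (0:ℝ) < n1 + n2 := by linarith
  have hn12' : n1 + n2 ≠ 0 := ne_of_gt hn12
  have hppos : 0 < p := hp.1
  have hp1 : 0 < 1 - p := by linarith [hp.2]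
  have hpne : p ≠ 0 := ne_of_gt hppos
  have hp1ne : (1:ℝ) - p ≠ 0 := ne_of_gt hp1
  set c : ℝ := a1 - p with hcdef
  have hc : c = n2 * (a1 - a2) / (n1 + n2) := by
    rw [hcdef, hpdef]; field_simp; ring
  -- derivative of inner functions
  have hid : HasDerivAt (fun η : ℝ => η * c) c 0 := by
    simpa using (hasDerivAt_id (0:ℝ)).mul_const c
  have hin1 : HasDerivAt (fun η : ℝ => p + η * c) c 0 := hid.const_add p
  have hin1' : HasDerivAt (fun η : ℝ => 1 - (p + η * c)) (-c) 0 := hin1.const_sub 1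
  have hin2 : HasDerivAt (fun η : ℝ => p - (n1 / n2) * (η * c)) (-(n1 / n2 * c)) 0 :=
    (hid.const_mul (n1 / n2)).const_sub p
  have hin2' : HasDerivAt (fun η : ℝ => 1 - (p - (n1 / n2) * (η * c))) (n1 / n2 * c) 0 := by
    simpa using hin2.const_sub 1
  -- log derivatives
  have hlog1 : HasDerivAt (fun η : ℝ => Real.log (p + η * c)) (p⁻¹ * c) 0 := by
    have := (Real.hasDerivAt_log (by simpa using hpne)).comp 0 hin1
    simpa [Function.comp_def] using this
  have hlog1' : HasDerivAt (fun η : ℝ => Real.log (1 - (p + η * c))) ((1 - p)⁻¹ * (-c)) 0 := by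
    have := (Real.hasDerivAt_log (by simpa using hp1ne)).comp 0 hin1'
    simpa [Function.comp_def] using this
  have hlog2 : HasDerivAt (fun η : ℝ => Real.log (p - (n1 / n2) * (η * c)))
      (p⁻¹ * (-(n1 / n2 * c))) 0 := by
    have := (Real.hasDerivAt_log (by simpa using hpne)).comp 0 hin2
    simpa [Function.comp_def] using this
  have hlog2' : HasDerivAt (fun η : ℝ => Real.log (1 - (p - (n1 / n2) * (η * c))))
      ((1 - p)⁻¹ * (n1 / n2 * c)) 0 := by
    have := (Real.hasDerivAt_log (by simpa using hp1ne)).comp 0 hin2'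
    simpa [Function.comp_def] using this
  -- logLoss derivatives
  have hf1 : HasDerivAt (fun η : ℝ => logLoss ν1 (p + η * c))
      (-ν1 * (p⁻¹ * c) - (1 - ν1) * ((1 - p)⁻¹ * (-c))) 0 := by
    unfold logLoss
    exact (hlog1.const_mul (-ν1)).sub (hlog1'.const_mul (1 - ν1))
  have hf2 : HasDerivAt (fun η : ℝ => logLoss ν2 (p - (n1 / n2) * (η * c)))
      (-ν2 * (p⁻¹ * (-(n1 / n2 * c))) - (1 - ν2) * ((1 - p)⁻¹ * (n1 / n2 * c))) 0 := by
    unfold logLoss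
    exact (hlog2.const_mul (-ν2)).sub (hlog2'.const_mul (1 - ν2))
  set K : ℝ := n1 * n2 * (a1 - a2) * (ν2 - ν1) / ((n1 + n2)^2 * (p * (1 - p))) with hKdef
  have hg : HasDerivAt (fun η : ℝ => L (η * c)) K 0 := by
    have hD : HasDerivAt (fun η : ℝ => (1 / (n1 + n2)) *
        (n1 * logLoss ν1 (p + η * c) + n2 * logLoss ν2 (p - (n1 / n2) * (η * c))))
        ((1 / (n1 + n2)) * (n1 * (-ν1 * (p⁻¹ * c) - (1 - ν1) * ((1 - p)⁻¹ * (-c)))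
          + n2 * (-ν2 * (p⁻¹ * (-(n1 / n2 * c))) - (1 - ν2) * ((1 - p)⁻¹ * (n1 / n2 * c))))) 0 :=
      ((hf1.const_mul n1).add (hf2.const_mul n2)).const_mul (1 / (n1 + n2))
    have heq : (fun η : ℝ => L (η * c)) = (fun η : ℝ => (1 / (n1 + n2)) *
        (n1 * logLoss ν1 (p + η * c) + n2 * logLoss ν2 (p - (n1 / n2) * (η * c)))) := by
      funext η; rw [hL]
    rw [heq]
    convert hD using 1
    rw [hKdef, hc]
    field_simp
    ring
  have hane' : a1 - a2 ≠ 0 := sub_ne_zero.2 hane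
  have hνne' : ν1 - ν2 ≠ 0 := sub_ne_zero.2 hνne
  have hden : 0 < (n1 + n2)^2 * (p * (1 - p)) := by positivity
  rcases lt_or_gt_of_ne (mul_ne_zero hane' hνne') with hprod | hprod
  · -- product negative: K > 0, loss increases
    have hKpos : 0 < K := by
      rw [hKdef]
      apply div_pos _ hden
      have h0 : n1 * n2 * (a1 - a2) * (ν2 - ν1) = n1 * n2 * (-((a1 - a2) * (ν1 - ν2))) := by ring
      rw [h0]
      exact mul_pos (mul_pos hn1 hn2) (neg_pos.2 hprod)
    obtain ⟨η0, hη0, h⟩ := exists_gt_of_hasDerivAt_pos hg hKpos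
    refine ⟨η0, hη0, fun η hη => ?_⟩
    have h1 := h η hη
    simp only [zero_mul] at h1
    constructor
    · intro hlt; exfalso; exact absurd hlt (not_lt.2 (le_of_lt h1))
    · intro hgt; exact absurd hgt (not_lt.2 (le_of_lt hprod))
  · -- product positive: K < 0, loss decreases
    have hKneg : K < 0 := by
      rw [hKdef]
      apply div_neg_of_neg_of_pos _ hden
      have h0 : n1 * n2 * (a1 - a2) * (ν2 - ν1) = -(n1 * n2 * ((a1 - a2) * (ν1 - ν2))) := by ring
      rw [h0]
      exact neg_neg_iff_pos.2 (mul_pos (mul_pos hn1 hn2) hprod)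
    obtain ⟨η0, hη0, h⟩ := exists_lt_of_hasDerivAt_neg hg hKneg
    refine ⟨η0, hη0, fun η hη => ?_⟩
    have h1 := h η hη
    simp only [zero_mul] at h1
    exact ⟨fun _ => hprod, fun _ => h1⟩
end

section
/- Let n1, n2 ≥ 1 be integers. Suppose each arm i has 2 n_i binary observations split evenly into training and validation halves, with training means a1, a2 ∈ [0, 1] (a1 ≠ a2), validation means ν1, ν2 ∈ [0, 1] (ν1 ≠ ν2), and full-sample difference Δ = (Δ_tr + Δ_val)/2 > 0, where Δ_tr = a1 − a2 and Δ_val = ν1 − ν2. Let p = (n1·a1 + n2·a2)/(n1 + n2) and assume p ∈ (0, 1), and define L(δ) = (1/(n1 + n2)) · [ n1·ℓ(ν1, p + δ) + n2·ℓ(ν2, p − (n1/n2)·δ) ]. Then there exists η0 > 0 such that for all η ∈ (0, η0): L(η·(a1 − p)) < L(0) if and only if 0 < Δ_tr < 2Δ. (This is the full equivalence (1) ⟺ (3) of Proposition 1: Tree_1 is accepted by early stopping exactly when the training difference lies in (0, 2Δ).) -/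
/-- If a function has nonzero derivative `D` at `0`, then for sufficiently small
positive `η`, `f η < f 0` holds iff `D < 0`. -/
lemma sign_of_deriv (f : ℝ → ℝ) (D : ℝ) (hD : HasDerivAt f D 0) (hD0 : D ≠ 0) :
    ∃ η0 > (0:ℝ), ∀ η ∈ Set.Ioo (0:ℝ) η0, (f η < f 0 ↔ D < 0) := by
  have hs : Filter.Tendsto (slope f 0) (nhdsWithin 0 {(0:ℝ)}ᶜ) (nhds D) :=
    hasDerivAt_iff_tendsto_slope.mp hD
  have hs' : Filter.Tendsto (slope f 0) (nhdsWithin 0 (Set.Ioi 0)) (nhds D) :=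
    hs.mono_left (nhdsWithin_mono _ (fun x hx => ne_of_gt hx))
  rcases lt_or_gt_of_ne hD0 with hneg | hpos
  · have hev : {η : ℝ | slope f 0 η < 0} ∈ nhdsWithin (0:ℝ) (Set.Ioi 0) :=
      hs' (Iio_mem_nhds hneg)
    rcases mem_nhdsGT_iff_exists_Ioo_subset.mp hev with ⟨u, hu, hsub⟩
    refine ⟨u, hu, fun η hη => ?_⟩
    have h1 : slope f 0 η < 0 := hsub hη
    rw [slope_def_field] at h1
    have hηpos : (0:ℝ) < η := hη.1
    have h2 : f η - f 0 < 0 := by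
      have := div_neg_iff.mp (by simpa [sub_zero] using h1)
      rcases this with ⟨h, h'⟩ | ⟨h, h'⟩
      · linarith
      · linarith
    exact iff_of_true (by linarith) hneg
  · have hev : {η : ℝ | 0 < slope f 0 η} ∈ nhdsWithin (0:ℝ) (Set.Ioi 0) :=
      hs' (Ioi_mem_nhds hpos)
    rcases mem_nhdsGT_iff_exists_Ioo_subset.mp hev with ⟨u, hu, hsub⟩
    refine ⟨u, hu, fun η hη => ?_⟩
    have h1 : 0 < slope f 0 η := hsub hη
    rw [slope_def_field] at h1
    have hηpos : (0:ℝ) < η := hη.1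
    have h2 : 0 < f η - f 0 := by
      have := div_pos_iff.mp (by simpa [sub_zero] using h1)
      rcases this with ⟨h, h'⟩ | ⟨h, h'⟩
      · linarith
      · linarith
    exact iff_of_false (by linarith) (by linarith)

set_option maxHeartbeats 1000000 in
/-- Full equivalence (1) ⟺ (3) of Proposition 1: for sufficiently small learning rate,
`Tree_1` is accepted by early stopping (the updated ensemble strictly reduces the
validation log loss) exactly when the training difference `Δ_tr` lies in `(0, 2Δ)`,
where `Δ = (Δ_tr + Δ_val)/2 > 0`. -/
theorem tree1_accepted_iff_trainingDiff_in_interval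
    (n1 n2 : ℕ) (hn1 : 1 ≤ n1) (hn2 : 1 ≤ n2)
    (a1 a2 ν1 ν2 : ℝ)
    (ha1 : a1 ∈ Set.Icc (0 : ℝ) 1) (ha2 : a2 ∈ Set.Icc (0 : ℝ) 1) (hane : a1 ≠ a2)
    (hν1 : ν1 ∈ Set.Icc (0 : ℝ) 1) (hν2 : ν2 ∈ Set.Icc (0 : ℝ) 1) (hνne : ν1 ≠ ν2)
    (Δtr Δval Δ : ℝ)
    (hΔtr : Δtr = a1 - a2) (hΔval : Δval = ν1 - ν2)
    (hΔ : Δ = (Δtr + Δval) / 2) (hΔpos : 0 < Δ)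
    (p : ℝ) (hpdef : p = ((n1 : ℝ) * a1 + (n2 : ℝ) * a2) / ((n1 : ℝ) + (n2 : ℝ)))
    (hp : p ∈ Set.Ioo (0 : ℝ) 1)
    (L : ℝ → ℝ)
    (hL : ∀ δ : ℝ, L δ = (1 / ((n1 : ℝ) + (n2 : ℝ))) *
      ((n1 : ℝ) * logLoss ν1 (p + δ)
        + (n2 : ℝ) * logLoss ν2 (p - ((n1 : ℝ) / (n2 : ℝ)) * δ))) :
    ∃ η0 > (0 : ℝ), ∀ η ∈ Set.Ioo (0 : ℝ) η0,
      (L (η * (a1 - p)) < L 0 ↔ (0 < Δtr ∧ Δtr < 2 * Δ)) := by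
  have hn1' : (1:ℝ) ≤ (n1:ℝ) := by exact_mod_cast hn1
  have hn2' : (1:ℝ) ≤ (n2:ℝ) := by exact_mod_cast hn2
  have hn1pos : (0:ℝ) < (n1:ℝ) := by linarith
  have hn2pos : (0:ℝ) < (n2:ℝ) := by linarith
  have hNpos : (0:ℝ) < (n1:ℝ) + (n2:ℝ) := by linarith
  have hN0 : ((n1:ℝ) + (n2:ℝ)) ≠ 0 := ne_of_gt hNpos
  have hp0 : p ≠ 0 := ne_of_gt hp.1
  have hp1 : (1:ℝ) - p ≠ 0 := ne_of_gt (by linarith [hp.2])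
  set s := a1 - p with hs
  set r := (n1:ℝ)/(n2:ℝ) with hr
  -- derivative of the composed validation loss at 0
  have hu1 : HasDerivAt (fun η : ℝ => p + η * s) s 0 := by
    simpa using ((hasDerivAt_id (0:ℝ)).mul_const s).const_add p
  have hlog1 : HasDerivAt (fun η : ℝ => Real.log (p + η * s)) (p⁻¹ * s) 0 := by
    have h : HasDerivAt Real.log (p⁻¹) (p + 0 * s) := by simpa using Real.hasDerivAt_log hp0
    exact h.comp 0 hu1
  have hv1 : HasDerivAt (fun η : ℝ => 1 - (p + η * s)) (-s) 0 := hu1.const_sub 1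
  have hlog1' : HasDerivAt (fun η : ℝ => Real.log (1 - (p + η * s))) ((1-p)⁻¹ * (-s)) 0 := by
    have h : HasDerivAt Real.log ((1-p)⁻¹) (1 - (p + 0 * s)) := by
      simpa using Real.hasDerivAt_log hp1
    exact h.comp 0 hv1
  have hA : HasDerivAt (fun η : ℝ => logLoss ν1 (p + η * s))
      (-ν1 * (p⁻¹ * s) - (1 - ν1) * ((1-p)⁻¹ * (-s))) 0 := by
    unfold logLoss
    exact (hlog1.const_mul (-ν1)).sub (hlog1'.const_mul (1 - ν1))
  have hu2 : HasDerivAt (fun η : ℝ => p - r * (η * s)) (-(r * s)) 0 := by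
    simpa [mul_comm] using (((hasDerivAt_id (0:ℝ)).mul_const s).const_mul r).const_sub p
  have hlog2 : HasDerivAt (fun η : ℝ => Real.log (p - r * (η * s))) (p⁻¹ * (-(r * s))) 0 := by
    have h : HasDerivAt Real.log (p⁻¹) (p - r * (0 * s)) := by simpa using Real.hasDerivAt_log hp0
    exact h.comp 0 hu2
  have hv2 : HasDerivAt (fun η : ℝ => 1 - (p - r * (η * s))) (r * s) 0 := by
    simpa using hu2.const_sub 1
  have hlog2' : HasDerivAt (fun η : ℝ => Real.log (1 - (p - r * (η * s)))) ((1-p)⁻¹ * (r * s)) 0 := by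
    have h : HasDerivAt Real.log ((1-p)⁻¹) (1 - (p - r * (0 * s))) := by
      simpa using Real.hasDerivAt_log hp1
    exact h.comp 0 hv2
  have hB : HasDerivAt (fun η : ℝ => logLoss ν2 (p - r * (η * s)))
      (-ν2 * (p⁻¹ * (-(r * s))) - (1 - ν2) * ((1-p)⁻¹ * (r * s))) 0 := by
    unfold logLoss
    exact (hlog2.const_mul (-ν2)).sub (hlog2'.const_mul (1 - ν2))
  have hg : HasDerivAt (fun η : ℝ => (1 / ((n1 : ℝ) + (n2 : ℝ))) *
      ((n1 : ℝ) * logLoss ν1 (p + η * s)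
        + (n2 : ℝ) * logLoss ν2 (p - r * (η * s))))
      ((1 / ((n1 : ℝ) + (n2 : ℝ))) *
        ((n1 : ℝ) * (-ν1 * (p⁻¹ * s) - (1 - ν1) * ((1-p)⁻¹ * (-s)))
          + (n2 : ℝ) * (-ν2 * (p⁻¹ * (-(r * s))) - (1 - ν2) * ((1-p)⁻¹ * (r * s))))) 0 :=
    ((hA.const_mul (n1:ℝ)).add (hB.const_mul (n2:ℝ))).const_mul (1 / ((n1:ℝ) + (n2:ℝ)))
  -- the function in the statement equals this function
  have hfg : (fun η : ℝ => L (η * (a1 - p))) = (fun η : ℝ => (1 / ((n1 : ℝ) + (n2 : ℝ))) *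
      ((n1 : ℝ) * logLoss ν1 (p + η * s)
        + (n2 : ℝ) * logLoss ν2 (p - r * (η * s)))) := by
    funext η
    rw [hL (η * (a1 - p))]
  have hf : HasDerivAt (fun η : ℝ => L (η * (a1 - p)))
      ((1 / ((n1 : ℝ) + (n2 : ℝ))) *
        ((n1 : ℝ) * (-ν1 * (p⁻¹ * s) - (1 - ν1) * ((1-p)⁻¹ * (-s)))
          + (n2 : ℝ) * (-ν2 * (p⁻¹ * (-(r * s))) - (1 - ν2) * ((1-p)⁻¹ * (r * s))))) 0 := by
    rw [hfg]; exact hg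
  -- closed form of the derivative
  have hskey : s = (n2:ℝ) / ((n1:ℝ) + (n2:ℝ)) * Δtr := by
    rw [hs, hΔtr, hpdef]; field_simp; ring
  set K : ℝ := (n1:ℝ) * (n2:ℝ) / ((n1:ℝ) + (n2:ℝ))^2 * (1 / (p * (1 - p))) with hK
  have hKpos : 0 < K := by
    rw [hK]
    have h1 : 0 < p * (1 - p) := mul_pos hp.1 (by linarith [hp.2])
    positivity
  have hDval : ((1 / ((n1 : ℝ) + (n2 : ℝ))) *
        ((n1 : ℝ) * (-ν1 * (p⁻¹ * s) - (1 - ν1) * ((1-p)⁻¹ * (-s)))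
          + (n2 : ℝ) * (-ν2 * (p⁻¹ * (-(r * s))) - (1 - ν2) * ((1-p)⁻¹ * (r * s)))))
      = -(Δtr * Δval) * K := by
    rw [hskey, hr, hK, hΔval]
    have h1 : p * (1 - p) ≠ 0 := mul_ne_zero hp0 hp1
    field_simp
    ring
  rw [hDval] at hf
  -- sign analysis
  have hΔtrne : Δtr ≠ 0 := by rw [hΔtr]; exact sub_ne_zero_of_ne hane
  have hΔvalne : Δval ≠ 0 := by rw [hΔval]; exact sub_ne_zero_of_ne hνne
  have hsum : 0 < Δtr + Δval := by
    have : 0 < (Δtr + Δval) / 2 := hΔ ▸ hΔpos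
    linarith
  have hD0 : -(Δtr * Δval) * K ≠ 0 := by
    have : Δtr * Δval ≠ 0 := mul_ne_zero hΔtrne hΔvalne
    intro h
    rcases mul_eq_zero.mp h with h' | h'
    · exact this (by linarith [neg_eq_zero.mp h'])
    · exact hKpos.ne' h'
  have hiff : (-(Δtr * Δval) * K < 0) ↔ (0 < Δtr ∧ Δtr < 2 * Δ) := by
    constructor
    · intro h
      have hx : 0 < Δtr * Δval * K := by rw [neg_mul] at h; linarith
      have hprod : 0 < Δtr * Δval := by
        have h2 := div_pos hx hKpos
        rwa [mul_div_assoc, div_self hKpos.ne', mul_one] at h2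
      rcases mul_pos_iff.mp hprod with ⟨h1, h2⟩ | ⟨h1, h2⟩
      · exact ⟨h1, by rw [hΔ]; linarith⟩
      · linarith
    · rintro ⟨h1, h2⟩
      have h2' : 0 < Δval := by rw [hΔ] at h2; linarith
      have h3 : 0 < Δtr * Δval * K := mul_pos (mul_pos h1 h2') hKpos
      rw [neg_mul]
      linarith
  obtain ⟨η0, hη0, hfin⟩ := sign_of_deriv (fun η : ℝ => L (η * (a1 - p)))
    (-(Δtr * Δval) * K) hf hD0
  refine ⟨η0, hη0, fun η hη => ?_⟩
  have := hfin η hη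
  rw [show (0:ℝ) * (a1 - p) = 0 by ring] at this
  rw [this, hiff]
end
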